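/- Let W, M, f be a conditional model satisfying β1–β4 and β5w. Let A, B, E ∈ M with f(A,E) = A, f(B,E) = B (both independent of E), and A ∩ E ⊆ B ∩ E. Then E = ∅ or A ⊆ B. -/
import Mathlib


/-- Semantic 'independence and regularity': in a conditional model with β1–β4 and β5w,
if `A` and `B` are independent of `E` and `A ∩ E ⊆ B ∩ E`, then `E = ∅` or `A ⊆ B`. -/
theorem cond_model_regularity {W : Type*} (M : Set (Set W))
    (hM_univ : (Set.univ : Set W) ∈ M)
    (hM_inter : ∀ A ∈ M, ∀ B ∈ M, A ∩ B ∈ M)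
    (hM_compl : ∀ A ∈ M, Aᶜ ∈ M)
    (f : Set W → Set W → Set W)
    (hf : ∀ A ∈ M, ∀ B ∈ M, f B A ∈ M)
    (hβ1 : ∀ A ∈ M, ∀ B ∈ M, A ⊆ B → A ≠ ∅ → f B A = Set.univ)
    (hβ2 : ∀ A ∈ M, ∀ B ∈ M, ∀ C ∈ M, f (B ∪ C) A ⊆ f B A ∪ f C A)
    (hβ3 : ∀ A ∈ M, ∀ B ∈ M, A ∩ f B A ⊆ B)
    (hβ4 : ∀ A ∈ M, ∀ B ∈ M, f Bᶜ A = (f B A)ᶜ)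
    (hβ5w : ∀ A ∈ M, ∀ B ∈ M, f B A = B → f B Aᶜ = B) :
    ∀ A ∈ M, ∀ B ∈ M, ∀ E ∈ M, f A E = A → f B E = B →
      A ∩ E ⊆ B ∩ E → E = ∅ ∨ A ⊆ B := by
  intro A hA B hB E hE hfA hfB hsub
  rcases eq_or_ne E ∅ with hEe | hEne
  · exact Or.inl hEe
  right
  have hAc : Aᶜ ∈ M := hM_compl A hA
  have hU : Aᶜ ∪ B ∈ M := by
    have : (A ∩ Bᶜ)ᶜ ∈ M := hM_compl _ (hM_inter A hA Bᶜ (hM_compl B hB))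
    simpa [Set.compl_inter] using this
  have hEsub : E ⊆ Aᶜ ∪ B := by
    intro x hx
    by_cases hxA : x ∈ A
    · exact Or.inr (hsub ⟨hxA, hx⟩).1
    · exact Or.inl hxA
  have h1 : f (Aᶜ ∪ B) E = Set.univ := hβ1 E hE _ hU hEsub hEne
  have h2 : f (Aᶜ ∪ B) E ⊆ f Aᶜ E ∪ f B E := hβ2 E hE Aᶜ hAc B hB
  have h4 : f Aᶜ E = Aᶜ := by rw [hβ4 E hE A hA, hfA]
  have : (Set.univ : Set W) ⊆ Aᶜ ∪ B := by
    rw [← h1]; rw [h4, hfB] at h2; exact h2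
  intro x hxA
  rcases this (Set.mem_univ x) with h | h
  · exact absurd hxA h
  · exact h
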